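/- For every numeric planning problem Π and every total order < of the actions of Π, the R²∃ <-encoding Π^< of Π is complete: if Π has a valid plan, then Π^<_n is satisfiable for some bound n ≥ 0. -/

import Mathlib

open scoped Classical

namespace PatternPlanning

/-! ## Numeric planning problems -/

/-- A linear expression `∑ w, coeff w * w + const` over the numeric variables `VN`. -/
structure LinExpr (VN : Type) where
  coeff : VN → ℚ
  const : ℚ

/-- Value of a linear expression under a numeric valuation. -/
def LinExpr.eval {VN : Type} [Fintype VN] (e : LinExpr VN) (ν : VN → ℚ) : ℚ :=
  (∑ w, e.coeff w * ν w) + e.const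

/-- The comparison operators `≥ , > , =` of numeric conditions `ψ ⊵ 0`. -/
inductive CompOp : Type
  | ge | gt | eq

/-- `op.holds q` means `q ⊵ 0`. -/
def CompOp.holds : CompOp → ℚ → Prop
  | .ge, q => 0 ≤ q
  | .gt, q => 0 < q
  | .eq, q => q = 0

/-- A numeric condition `ψ ⊵ 0`. -/
structure NumCond (VN : Type) where
  expr : LinExpr VN
  op : CompOp

def NumCond.holds {VN : Type} [Fintype VN] (c : NumCond VN) (ν : VN → ℚ) : Prop :=
  c.op.holds (c.expr.eval ν)

/-- A propositional condition `v = ⊤` or `v = ⊥`. -/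
inductive PropCond (VB : Type)
  | isTrue (v : VB)
  | isFalse (v : VB)

def PropCond.holds {VB : Type} : PropCond VB → (VB → Bool) → Prop
  | .isTrue v, β => β v = true
  | .isFalse v, β => β v = false

/-- An action: propositional and numeric preconditions, Boolean effects `v := ⊤/⊥`
and numeric effects `w := ψ` (each variable assigned at most once, enforced by
the functional representation of the effects). -/
structure Act (VB VN : Type) where
  preB : List (PropCond VB)
  preN : List (NumCond VN)
  effB : VB → Option Bool
  effN : VN → Option (LinExpr VN)

def Act.assignsB {VB VN : Type} (a : Act VB VN) (v : VB) : Prop := a.effB v ≠ none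
def Act.assignsN {VB VN : Type} (a : Act VB VN) (x : VN) : Prop := a.effN x ≠ none

/-- The effect `x := e` is a linear increment `x += ψ` : `e = x + ψ` with `ψ` not
containing any variable assigned by `a`. -/
def Act.isIncr {VB VN : Type} (a : Act VB VN) (x : VN) (e : LinExpr VN) : Prop :=
  e.coeff x = 1 ∧ ∀ y, a.assignsN y → y ≠ x → e.coeff y = 0

/-- The increment part `ψ` of a linear increment `x := x + ψ`. -/
noncomputable def incrPart {VN : Type} (e : LinExpr VN) (x : VN) : LinExpr VN :=
  ⟨Function.update e.coeff x 0, e.const⟩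

/-- The (general) assignment `x := e` is simple: `e` contains no variable assigned by `a`. -/
def Act.isSimpleA {VB VN : Type} (a : Act VB VN) (e : LinExpr VN) : Prop :=
  ∀ y, a.assignsN y → e.coeff y = 0

/-- An action is eligible for rolling. -/
def Act.eligible {VB VN : Type} (a : Act VB VN) : Prop :=
  (∀ v, PropCond.isFalse v ∈ a.preB → a.effB v ≠ some true) ∧
  (∀ v, PropCond.isTrue v ∈ a.preB → a.effB v ≠ some false) ∧
  (∀ x e, a.effN x = some e → a.isIncr x e ∨ a.isSimpleA e) ∧
  (∃ x e, a.effN x = some e ∧ a.isIncr x e)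

/-- A state: values of the Boolean and numeric variables. -/
structure PState (VB VN : Type) where
  boolVal : VB → Bool
  numVal : VN → ℚ

/-- `a` is executable in `s`: all preconditions of `a` hold in `s`. -/
def Act.execIn {VB VN : Type} [Fintype VN] (a : Act VB VN) (s : PState VB VN) : Prop :=
  (∀ c ∈ a.preB, c.holds s.boolVal) ∧ (∀ c ∈ a.preN, c.holds s.numVal)

/-- The result of executing `a` in `s`. -/
def Act.result {VB VN : Type} [Fintype VN] (a : Act VB VN) (s : PState VB VN) : PState VB VN where
  boolVal := fun v => (a.effB v).getD (s.boolVal v)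
  numVal := fun x =>
    match a.effN x with
    | none => s.numVal x
    | some e => e.eval s.numVal

/-- Execution of a sequence of actions: `some` of the last induced state if the
sequence is executable, `none` otherwise. -/
noncomputable def execSeq {VB VN A : Type} [Fintype VN] (acts : A → Act VB VN) :
    List A → PState VB VN → Option (PState VB VN)
  | [], s => some s
  | a :: rest, s =>
      if (acts a).execIn s then execSeq acts rest ((acts a).result s) else none

/-- Goal formulas: propositional combinations of propositional and numeric conditions. -/
inductive Formula (VB VN : Type)
  | prop (c : PropCond VB)
  | num (c : NumCond VN)
  | not (f : Formula VB VN)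
  | and (f g : Formula VB VN)
  | or (f g : Formula VB VN)

def Formula.holds {VB VN : Type} [Fintype VN] :
    Formula VB VN → (VB → Bool) → (VN → ℚ) → Prop
  | .prop c, β, _ => c.holds β
  | .num c, _, ν => c.holds ν
  | .not f, β, ν => ¬ f.holds β ν
  | .and f g, β, ν => f.holds β ν ∧ g.holds β ν
  | .or f g, β, ν => f.holds β ν ∨ g.holds β ν

/-- A numeric planning problem `Π = ⟨V_B, V_N, A, I, G⟩` (the sets of variables and
of actions are the types `VB`, `VN`, `A`). -/
structure Problem (VB VN A : Type) where
  acts : A → Act VB VN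
  init : PState VB VN
  goals : List (Formula VB VN)

def Problem.goalSat {VB VN A : Type} [Fintype VN] (P : Problem VB VN A)
    (β : VB → Bool) (ν : VN → ℚ) : Prop :=
  ∀ f ∈ P.goals, f.holds β ν

/-- `α` is a valid plan for `P`. -/
def Problem.isPlan {VB VN A : Type} [Fintype VN] (P : Problem VB VN A) (α : List A) : Prop :=
  ∃ s, execSeq P.acts α P.init = some s ∧ P.goalSat s.boolVal s.numVal

def Problem.hasPlan {VB VN A : Type} [Fintype VN] (P : Problem VB VN A) : Prop :=
  ∃ α, P.isPlan α

/-! ## ψ[a] : rolled substitution -/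

/-- Value of the variable `x` in `ψ[a]` when the action variable of `a` takes value `k`:
`x + (k-1)·ψ₁` for a linear increment `x += ψ₁`, `ψ₁` for a simple assignment `x := ψ₁`,
`x` otherwise. -/
noncomputable def rolledVarVal {VB VN : Type} [Fintype VN] (a : Act VB VN) (k : ℕ)
    (ν : VN → ℚ) (x : VN) : ℚ :=
  match a.effN x with
  | none => ν x
  | some e =>
      if a.isIncr x e then ν x + ((k : ℚ) - 1) * (incrPart e x).eval ν
      else if a.isSimpleA e then e.eval ν
      else ν x

/-- Value of `ψ[a]` under `ν` when the action variable of `a` takes the value `k`. -/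
noncomputable def rolledEval {VB VN : Type} [Fintype VN] (a : Act VB VN) (k : ℕ)
    (ψ : LinExpr VN) (ν : VN → ℚ) : ℚ :=
  (∑ x, ψ.coeff x * rolledVarVal a k ν x) + ψ.const

/-! ## The rolled-up encoding Π^R and the standard encoding Π^S -/

def occursInPre {VB VN : Type} (a : Act VB VN) (x : VN) : Prop :=
  ∃ c ∈ a.preN, c.expr.coeff x ≠ 0

def occursInEff {VB VN : Type} (a : Act VB VN) (x : VN) : Prop :=
  a.assignsN x ∨ ∃ y e, a.effN y = some e ∧ e.coeff x ≠ 0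

/-- Condition under which `mutex^R(A)` contains `a₁ = 0 ∨ a₂ = 0`. -/
def mutexCond {VB VN : Type} (a₁ a₂ : Act VB VN) : Prop :=
  (∃ v, PropCond.isFalse v ∈ a₁.preB ∧ a₂.effB v = some true) ∨
  (∃ v, PropCond.isTrue v ∈ a₁.preB ∧ a₂.effB v = some false) ∨
  (∃ x, a₁.assignsN x ∧ (occursInEff a₂ x ∨ occursInPre a₂ x))

/-- The symbolic transition relation `T^R(X,A,X')` of the rolled-up encoding, as a
predicate on the values `β,ν` for `X`, `u` for the (ℕ-valued) action variables `A`,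
and `β',ν'` for `X'`. -/
def TR {VB VN A : Type} [Fintype VN] (P : Problem VB VN A)
    (β : VB → Bool) (ν : VN → ℚ) (u : A → ℕ) (β' : VB → Bool) (ν' : VN → ℚ) : Prop :=
  -- pre^R(A)
  (∀ a, 0 < u a →
    (∀ v, PropCond.isFalse v ∈ (P.acts a).preB → β v = false) ∧
    (∀ v, PropCond.isTrue v ∈ (P.acts a).preB → β v = true) ∧
    (∀ c ∈ (P.acts a).preN, c.op.holds (c.expr.eval ν))) ∧
  (∀ a, 1 < u a → ∀ c ∈ (P.acts a).preN,
    c.op.holds (rolledEval (P.acts a) (u a) c.expr ν)) ∧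
  -- eff^R(A)
  (∀ a, 0 < u a →
    (∀ v b, (P.acts a).effB v = some b → β' v = b) ∧
    (∀ x e, (P.acts a).effN x = some e →
      ((P.acts a).isIncr x e → ν' x = ν x + (u a : ℚ) * (incrPart e x).eval ν) ∧
      (¬ (P.acts a).isIncr x e → ν' x = e.eval ν))) ∧
  -- frame^R(V_B ∪ V_N)
  (∀ v, (∀ a, (P.acts a).assignsB v → u a = 0) → β' v = β v) ∧
  (∀ x, (∀ a, (P.acts a).assignsN x → u a = 0) → ν' x = ν x) ∧
  -- mutex^R(A)
  (∀ a₁ a₂, a₁ ≠ a₂ → mutexCond (P.acts a₁) (P.acts a₂) → u a₁ = 0 ∨ u a₂ = 0) ∧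
  -- amo^R(A)
  (∀ a, ¬ (P.acts a).eligible → u a ≤ 1)

/-- The symbolic transition relation `T^S` of the standard encoding: `T^R` plus
`a = 0 ∨ a = 1` for every action. -/
def TS {VB VN A : Type} [Fintype VN] (P : Problem VB VN A)
    (β : VB → Bool) (ν : VN → ℚ) (u : A → ℕ) (β' : VB → Bool) (ν' : VN → ℚ) : Prop :=
  TR P β ν u β' ν' ∧ ∀ a, u a ≤ 1

/-- A (candidate) model of `Π^R_n` / `Π^S_n` : values for the `n+1` copies of the state
variables and the `n` copies of the ℕ-valued action variables. -/
structure RModel (VB VN A : Type) (n : ℕ) where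
  β : Fin (n + 1) → VB → Bool
  ν : Fin (n + 1) → VN → ℚ
  u : Fin n → A → ℕ

def RModel.validWith {VB VN A : Type} {n : ℕ} [Fintype VN] (m : RModel VB VN A n)
    (P : Problem VB VN A)
    (T : (VB → Bool) → (VN → ℚ) → (A → ℕ) → (VB → Bool) → (VN → ℚ) → Prop) : Prop :=
  m.β 0 = P.init.boolVal ∧ m.ν 0 = P.init.numVal ∧
  (∀ i : Fin n, T (m.β i.castSucc) (m.ν i.castSucc) (m.u i) (m.β i.succ) (m.ν i.succ)) ∧
  P.goalSat (m.β (Fin.last n)) (m.ν (Fin.last n))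

/-- `m` is a model of `Π^R_n`. -/
def RModel.validR {VB VN A : Type} {n : ℕ} [Fintype VN] (m : RModel VB VN A n)
    (P : Problem VB VN A) : Prop :=
  m.validWith P (TR P)

/-- `m` is a model of `Π^S_n`. -/
def RModel.validS {VB VN A : Type} {n : ℕ} [Fintype VN] (m : RModel VB VN A n)
    (P : Problem VB VN A) : Prop :=
  m.validWith P (TS P)

/-- The decoding of the rolled-up/standard encoding: the sequences in which each
action `a` occurs `u a` times consecutively. -/
def decodesRolled {A : Type} (u : A → ℕ) (α : List A) : Prop :=
  ∃ l : List A, l.Nodup ∧ (∀ a, a ∈ l) ∧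
    α = l.flatMap (fun a => List.replicate (u a) a)

/-- The sequences of actions associated to the model `m` of `Π^R_n`/`Π^S_n`
(the set `(Π^R_n)⁻¹` is the union of `m.plans` over the models `m`). -/
def RModel.plans {VB VN A : Type} {n : ℕ} (m : RModel VB VN A n) (α : List A) : Prop :=
  ∃ αs : Fin n → List A, (∀ i, decodesRolled (m.u i) (αs i)) ∧ α = (List.ofFn αs).flatten

/-- `Π^R_n` is satisfiable. -/
def satR {VB VN A : Type} [Fintype VN] (P : Problem VB VN A) (n : ℕ) : Prop :=
  ∃ m : RModel VB VN A n, m.validR P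

/-- `Π^S_n` is satisfiable. -/
def satS {VB VN A : Type} [Fintype VN] (P : Problem VB VN A) (n : ℕ) : Prop :=
  ∃ m : RModel VB VN A n, m.validS P

/-! ## The R²∃ <-encoding Π^< -/

/-- Value of `v^{≪,·}` after chaining through the actions of `l`:
the last auxiliary variable of an action of `l` assigning `v`, else the initial value. -/
noncomputable def chainB {VB VN A : Type} (acts : A → Act VB VN) (l : List A)
    (β : VB → Bool) (aux : A → VB → Bool) (v : VB) : Bool :=
  l.foldl (fun val b => if ((acts b).effB v).isSome then aux b v else val) (β v)

noncomputable def chainN {VB VN A : Type} (acts : A → Act VB VN) (l : List A)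
    (ν : VN → ℚ) (aux : A → VN → ℚ) (x : VN) : ℚ :=
  l.foldl (fun val b => if ((acts b).effN x).isSome then aux b x else val) (ν x)

/-- The actions strictly preceding `a` in the total order `ord`. -/
noncomputable def before {A : Type} (ord : List A) (a : A) : List A :=
  ord.takeWhile (fun b => decide (b ≠ a))

/-- The symbolic transition relation `T^<(X,A,X')` of the R²∃ `<`-encoding.
`actb` gives the values of the Boolean action variables, `auxB`/`auxN` the values of the
fresh state variables `v^a`. -/
def Tlt {VB VN A : Type} [Fintype VN] (P : Problem VB VN A) (ord : List A)
    (β : VB → Bool) (ν : VN → ℚ) (actb : A → Bool)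
    (auxB : A → VB → Bool) (auxN : A → VN → ℚ)
    (β' : VB → Bool) (ν' : VN → ℚ) : Prop :=
  -- pre^<(A)
  (∀ a, actb a = true →
    (∀ v, PropCond.isFalse v ∈ (P.acts a).preB →
      chainB P.acts (before ord a) β auxB v = false) ∧
    (∀ v, PropCond.isTrue v ∈ (P.acts a).preB →
      chainB P.acts (before ord a) β auxB v = true) ∧
    (∀ c ∈ (P.acts a).preN,
      c.op.holds (c.expr.eval (chainN P.acts (before ord a) ν auxN)))) ∧
  -- eff^<(A)
  (∀ a v b, (P.acts a).effB v = some b →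
    (actb a = true → auxB a v = b) ∧
    (actb a = false → auxB a v = chainB P.acts (before ord a) β auxB v)) ∧
  (∀ a x e, (P.acts a).effN x = some e →
    (actb a = true → auxN a x = e.eval (chainN P.acts (before ord a) ν auxN)) ∧
    (actb a = false → auxN a x = chainN P.acts (before ord a) ν auxN x)) ∧
  -- frame^<(V_B ∪ V_N)
  (∀ v, β' v = chainB P.acts ord β auxB v) ∧
  (∀ x, ν' x = chainN P.acts ord ν auxN x)

/-- A (candidate) model of `Π^<_n`. -/
structure LtModel (VB VN A : Type) (n : ℕ) where
  β : Fin (n + 1) → VB → Bool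
  ν : Fin (n + 1) → VN → ℚ
  actb : Fin n → A → Bool
  auxB : Fin n → A → VB → Bool
  auxN : Fin n → A → VN → ℚ

def LtModel.valid {VB VN A : Type} {n : ℕ} [Fintype VN] (m : LtModel VB VN A n)
    (P : Problem VB VN A) (ord : List A) : Prop :=
  m.β 0 = P.init.boolVal ∧ m.ν 0 = P.init.numVal ∧
  (∀ i : Fin n, Tlt P ord (m.β i.castSucc) (m.ν i.castSucc) (m.actb i)
      (m.auxB i) (m.auxN i) (m.β i.succ) (m.ν i.succ)) ∧
  P.goalSat (m.β (Fin.last n)) (m.ν (Fin.last n))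

/-- The plan decoded from a model of `Π^<_n`: at each step, the actions of `ord`
whose Boolean action variable is true, in the order of `ord`. -/
def LtModel.plan {VB VN A : Type} {n : ℕ} (m : LtModel VB VN A n) (ord : List A) : List A :=
  (List.ofFn fun i : Fin n => ord.filter (m.actb i)).flatten

/-- `Π^<_n` is satisfiable. -/
def satLt {VB VN A : Type} [Fintype VN] (P : Problem VB VN A) (ord : List A) (n : ℕ) : Prop :=
  ∃ m : LtModel VB VN A n, m.valid P ord

/-! ## The pattern ≺-encoding Π^≺ -/

/-- `σ^{≺₁}(v)` for Boolean `v`, where `≺₁` is the prefix of `pat` of length `j`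
(`act j` is the value of the action variable of the `j`-th occurrence in the pattern). -/
noncomputable def sigB {VB VN A : Type} (acts : A → Act VB VN) (pat : List A)
    (act : ℕ → ℕ) (β : VB → Bool) : ℕ → VB → Bool
  | 0 => β
  | j + 1 => fun v =>
      match pat[j]? with
      | none => sigB acts pat act β j v
      | some a =>
          match (acts a).effB v with
          | some true => sigB acts pat act β j v || decide (0 < act j)
          | some false => sigB acts pat act β j v && decide (act j = 0)
          | none => sigB acts pat act β j v

/-- `σ^{≺₁}(x)` for numeric `x` (`aux j` gives the values of the fresh variables
`x^{≺₁;a}` introduced for the general assignments of the `j`-th occurrence). -/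
noncomputable def sigN {VB VN A : Type} [Fintype VN] (acts : A → Act VB VN) (pat : List A)
    (act : ℕ → ℕ) (aux : ℕ → VN → ℚ) (ν : VN → ℚ) : ℕ → VN → ℚ
  | 0 => ν
  | j + 1 => fun x =>
      match pat[j]? with
      | none => sigN acts pat act aux ν j x
      | some a =>
          match (acts a).effN x with
          | none => sigN acts pat act aux ν j x
          | some e =>
              if (acts a).isIncr x e then
                sigN acts pat act aux ν j x +
                  (act j : ℚ) * (incrPart e x).eval (sigN acts pat act aux ν j)
              else aux j x

/-- The symbolic transition relation `T^≺(X,A,X')` of the pattern `≺`-encoding. -/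
def Tpat {VB VN A : Type} [Fintype VN] (P : Problem VB VN A) (pat : List A)
    (β : VB → Bool) (ν : VN → ℚ) (act : ℕ → ℕ) (aux : ℕ → VN → ℚ)
    (β' : VB → Bool) (ν' : VN → ℚ) : Prop :=
  (∀ (j : ℕ) (hj : j < pat.length),
    -- pre^≺(A)
    (∀ v, PropCond.isFalse v ∈ (P.acts (pat.get ⟨j, hj⟩)).preB → 0 < act j →
      sigB P.acts pat act β j v = false) ∧
    (∀ v, PropCond.isTrue v ∈ (P.acts (pat.get ⟨j, hj⟩)).preB → 0 < act j →
      sigB P.acts pat act β j v = true) ∧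
    (∀ c ∈ (P.acts (pat.get ⟨j, hj⟩)).preN,
      (0 < act j → c.op.holds (c.expr.eval (sigN P.acts pat act aux ν j))) ∧
      (1 < act j → c.op.holds
        (rolledEval (P.acts (pat.get ⟨j, hj⟩)) (act j) c.expr (sigN P.acts pat act aux ν j)))) ∧
    -- eff^≺(A) (for the general assignments)
    (∀ x e, (P.acts (pat.get ⟨j, hj⟩)).effN x = some e →
      ¬ (P.acts (pat.get ⟨j, hj⟩)).isIncr x e →
      (act j = 0 → aux j x = sigN P.acts pat act aux ν j x) ∧
      (0 < act j → aux j x = e.eval (sigN P.acts pat act aux ν j))) ∧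
    -- amo^≺(A)
    (¬ (P.acts (pat.get ⟨j, hj⟩)).eligible → act j ≤ 1)) ∧
  -- frame^≺(V_B ∪ V_N)
  (∀ v, β' v = sigB P.acts pat act β pat.length v) ∧
  (∀ x, ν' x = sigN P.acts pat act aux ν pat.length x)

/-- The sequence decoded from the values `act` of the action variables of the pattern:
the `j`-th occurrence repeated `act j` times, in the order of the pattern. -/
def decodePat {A : Type} (pat : List A) (act : ℕ → ℕ) : List A :=
  (List.ofFn fun j : Fin pat.length => List.replicate (act j.val) (pat.get j)).flatten

/-- A (candidate) model of `Π^≺_n`. -/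
structure PatModel (VB VN A : Type) (n : ℕ) where
  β : Fin (n + 1) → VB → Bool
  ν : Fin (n + 1) → VN → ℚ
  act : Fin n → ℕ → ℕ
  aux : Fin n → ℕ → VN → ℚ

def PatModel.valid {VB VN A : Type} {n : ℕ} [Fintype VN] (m : PatModel VB VN A n)
    (P : Problem VB VN A) (pat : List A) : Prop :=
  m.β 0 = P.init.boolVal ∧ m.ν 0 = P.init.numVal ∧
  (∀ i : Fin n, Tpat P pat (m.β i.castSucc) (m.ν i.castSucc) (m.act i) (m.aux i)
      (m.β i.succ) (m.ν i.succ)) ∧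
  P.goalSat (m.β (Fin.last n)) (m.ν (Fin.last n))

/-- The plan decoded from a model of `Π^≺_n`. -/
def PatModel.plan {VB VN A : Type} {n : ℕ} (m : PatModel VB VN A n) (pat : List A) : List A :=
  (List.ofFn fun i : Fin n => decodePat pat (m.act i)).flatten

/-- `Π^≺_n` is satisfiable. -/
def satPat {VB VN A : Type} [Fintype VN] (P : Problem VB VN A) (pat : List A) (n : ℕ) : Prop :=
  ∃ m : PatModel VB VN A n, m.valid P pat

/-! ## Abstract encodings -/

/-- An abstract encoding `Π^E = ⟨X, A, I(X), T(X,A,X'), G(X)⟩` of a problem: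
`XAsgn` is the type of assignments to the state variables `X ⊇ V_B ∪ V_N`
(with projections giving the values of the variables of `V_B ∪ V_N`), `AAsgn` the type
of assignments to the action variables, `T` the symbolic transition relation and
`decode` its decoding function, associating at least one action sequence to each model. -/
structure Encoding (VB VN A : Type) where
  XAsgn : Type
  AAsgn : Type
  projB : XAsgn → VB → Bool
  projN : XAsgn → VN → ℚ
  T : XAsgn → AAsgn → XAsgn → Prop
  decode : XAsgn → AAsgn → XAsgn → List A → Prop
  decode_exists : ∀ x u x', T x u x' → ∃ α, decode x u x' α

def Encoding.stateOf {VB VN A : Type} (E : Encoding VB VN A) (x : E.XAsgn) : PState VB VN :=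
  ⟨E.projB x, E.projN x⟩

/-- The symbolic transition relation of `E` is correct: every action sequence
corresponding to a model of `T` is executable in the state given by the model and
leads to the state given by the primed variables. -/
def Encoding.correctT {VB VN A : Type} [Fintype VN] (E : Encoding VB VN A)
    (P : Problem VB VN A) : Prop :=
  ∀ x u x', E.T x u x' → ∀ α, E.decode x u x' α →
    execSeq P.acts α (E.stateOf x) = some (E.stateOf x')

/-- A (candidate) model of `Π^E_n`. -/
structure EncModel {VB VN A : Type} (E : Encoding VB VN A) (n : ℕ) where
  xs : Fin (n + 1) → E.XAsgn
  us : Fin n → E.AAsgn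

def EncModel.valid {VB VN A : Type} [Fintype VN] {E : Encoding VB VN A} {n : ℕ}
    (m : EncModel E n) (P : Problem VB VN A) : Prop :=
  E.projB (m.xs 0) = P.init.boolVal ∧ E.projN (m.xs 0) = P.init.numVal ∧
  (∀ i : Fin n, E.T (m.xs i.castSucc) (m.us i) (m.xs i.succ)) ∧
  P.goalSat (E.projB (m.xs (Fin.last n))) (E.projN (m.xs (Fin.last n)))

/-- The action sequences associated to a model of `Π^E_n`
(`(Π^E_n)⁻¹` is the union of `m.plans` over the models `m` of `Π^E_n`). -/
def EncModel.plans {VB VN A : Type} {E : Encoding VB VN A} {n : ℕ}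
    (m : EncModel E n) (α : List A) : Prop :=
  ∃ αs : Fin n → List A,
    (∀ i, E.decode (m.xs i.castSucc) (m.us i) (m.xs i.succ) (αs i)) ∧
    α = (List.ofFn αs).flatten

/-- The quantity `Δ` for an action `a` and an expression `ψ`: the sum, over the linear
increments `x += ψ₁` of `a` with `x` occurring in `ψ`, of `ψ₁` weighted by the coefficient
of `x` in `ψ`. -/
noncomputable def deltaVal {VB VN : Type} [Fintype VN] (a : Act VB VN)
    (ψ : LinExpr VN) (ν : VN → ℚ) : ℚ :=
  ∑ x, ψ.coeff x *
    (match a.effN x with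
     | some e => if a.isIncr x e then (incrPart e x).eval ν else 0
     | none => 0)

/-! ## Auxiliary lemmas for the completeness proof -/

section CompletenessAux

variable {VB VN A : Type}

private lemma foldl_upd_const {B : Type} (p : A → Bool) (g : A → B) (c : B) :
    ∀ l : List A, (∀ b ∈ l, p b = true → g b = c) →
      l.foldl (fun val b => if p b then g b else val) c = c := by
  intro l
  induction l with
  | nil => intro _; rfl
  | cons b l ih =>
    intro h
    simp only [List.foldl_cons]
    by_cases hb : p b = true
    · rw [if_pos hb, h b (by simp) hb]
      exact ih fun x hx hpx => h x (by simp [hx]) hpx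
    · rw [if_neg hb]
      exact ih fun x hx hpx => h x (by simp [hx]) hpx

private lemma foldl_upd_split {B : Type} (p : A → Bool) (g : A → B) (c : B)
    (l1 : List A) (a : A) (l2 : List A) (ha : p a = true)
    (h : ∀ b ∈ l2, p b = true → g b = g a) :
    (l1 ++ a :: l2).foldl (fun val b => if p b then g b else val) c = g a := by
  rw [List.foldl_append, List.foldl_cons, if_pos ha]
  exact foldl_upd_const p g (g a) l2 h

private lemma chainB_const' (acts : A → Act VB VN) (l : List A) (β : VB → Bool)
    (aux : A → VB → Bool) (v : VB)
    (h : ∀ b ∈ l, ((acts b).effB v).isSome = true → aux b v = β v) :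
    chainB acts l β aux v = β v :=
  foldl_upd_const (fun b => ((acts b).effB v).isSome) (fun b => aux b v) (β v) l h

private lemma chainB_split' (acts : A → Act VB VN) (l1 : List A) (a : A) (l2 : List A)
    (β : VB → Bool) (aux : A → VB → Bool) (v : VB)
    (ha : ((acts a).effB v).isSome = true)
    (h : ∀ b ∈ l2, ((acts b).effB v).isSome = true → aux b v = aux a v) :
    chainB acts (l1 ++ a :: l2) β aux v = aux a v :=
  foldl_upd_split (fun b => ((acts b).effB v).isSome) (fun b => aux b v) (β v) l1 a l2 ha h

private lemma chainN_const' (acts : A → Act VB VN) (l : List A) (ν : VN → ℚ)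
    (aux : A → VN → ℚ) (x : VN)
    (h : ∀ b ∈ l, ((acts b).effN x).isSome = true → aux b x = ν x) :
    chainN acts l ν aux x = ν x :=
  foldl_upd_const (fun b => ((acts b).effN x).isSome) (fun b => aux b x) (ν x) l h

private lemma chainN_split' (acts : A → Act VB VN) (l1 : List A) (a : A) (l2 : List A)
    (ν : VN → ℚ) (aux : A → VN → ℚ) (x : VN)
    (ha : ((acts a).effN x).isSome = true)
    (h : ∀ b ∈ l2, ((acts b).effN x).isSome = true → aux b x = aux a x) :
    chainN acts (l1 ++ a :: l2) ν aux x = aux a x :=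
  foldl_upd_split (fun b => ((acts b).effN x).isSome) (fun b => aux b x) (ν x) l1 a l2 ha h

private lemma before_prefix' (ord : List A) (a : A) : before ord a <+: ord :=
  List.takeWhile_prefix _

private lemma not_mem_before_self (ord : List A) (a : A) : a ∉ before ord a := by
  intro h
  have := List.mem_takeWhile_imp h
  simp at this

private lemma mem_before_of_split {ord : List A} (hnd : ord.Nodup)
    {l1 l2 : List A} {a b : A} (hs : ord = l1 ++ a :: l2) (hb : b ∈ l2) :
    a ∈ before ord b := by
  subst hs
  have hnd' := List.nodup_append'.mp hnd
  have hba : b ≠ a := by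
    intro h; subst h
    exact (List.nodup_cons.mp hnd'.2.1).1 hb
  have hbl1 : ∀ x ∈ l1, x ≠ b := by
    intro x hx hxb; subst hxb
    exact hnd'.2.2 hx (List.mem_cons_of_mem _ hb)
  clear hnd hnd'
  induction l1 with
  | nil =>
    simp only [List.nil_append, before, List.takeWhile_cons]
    rw [decide_eq_true (by exact fun h => hba h.symm : a ≠ b)]
    exact List.mem_cons_self
  | cons x l1 ih =>
    simp only [List.cons_append, before, List.takeWhile_cons]
    rw [decide_eq_true (hbl1 x (by simp))]
    exact List.mem_cons_of_mem _ (ih (fun y hy => hbl1 y (by simp [hy])))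

end CompletenessAux
section CompletenessAux2

variable {VB VN A : Type}

private lemma mem_of_prefixes {ord l : List A} (hl : l <+: ord) {a b : A}
    (hb : b ∈ l) (hab : a ∈ before ord b) : a ∈ l := by
  rcases List.prefix_or_prefix_of_prefix (before_prefix' ord b) hl with h | h
  · exact h.subset hab
  · exact absurd (h.subset hb) (not_mem_before_self ord b)

variable [Fintype VN]

private lemma step_Tlt (P : Problem VB VN A) (ord : List A) (hnd : ord.Nodup)
    (hall : ∀ a : A, a ∈ ord) (a : A) (s : PState VB VN)
    (hex : (P.acts a).execIn s) :
    Tlt P ord s.boolVal s.numVal (fun b => if b = a then true else false)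
      (fun b v => if a ∈ before ord b ∨ b = a then ((P.acts a).result s).boolVal v
        else s.boolVal v)
      (fun b x => if a ∈ before ord b ∨ b = a then ((P.acts a).result s).numVal x
        else s.numVal x)
      ((P.acts a).result s).boolVal ((P.acts a).result s).numVal := by
  classical
  set s' := (P.acts a).result s with hs'
  have hBnone : ∀ v, (P.acts a).effB v = none → s'.boolVal v = s.boolVal v := by
    intro v hv; simp [hs', Act.result, hv]
  have hBsome : ∀ v b', (P.acts a).effB v = some b' → s'.boolVal v = b' := by
    intro v b' hv; simp [hs', Act.result, hv]
  have hNnone : ∀ x, (P.acts a).effN x = none → s'.numVal x = s.numVal x := by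
    intro x hx; simp [hs', Act.result, hx]
  have hNsome : ∀ x e, (P.acts a).effN x = some e → s'.numVal x = e.eval s.numVal := by
    intro x e hx; simp [hs', Act.result, hx]
  -- the auxiliary assignments
  set AB : A → VB → Bool := fun b v =>
    if a ∈ before ord b ∨ b = a then s'.boolVal v else s.boolVal v with hAB
  set AN : A → VN → ℚ := fun b x =>
    if a ∈ before ord b ∨ b = a then s'.numVal x else s.numVal x with hAN
  -- general chain value
  have CBgen : ∀ l : List A, l <+: ord → ∀ v,
      chainB P.acts l s.boolVal AB v = (if a ∈ l then s'.boolVal v else s.boolVal v) := by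
    intro l hl v
    by_cases hal : a ∈ l
    · rw [if_pos hal]
      cases hv : (P.acts a).effB v with
      | none =>
        rw [hBnone v hv]
        refine chainB_const' _ _ _ _ _ ?_
        intro b _ _
        simp only [hAB]
        split
        · exact hBnone v hv
        · rfl
      | some b' =>
        obtain ⟨l1, l2, hsplit⟩ := List.append_of_mem hal
        obtain ⟨tl, htl⟩ := hl
        have hordsplit : ord = l1 ++ a :: (l2 ++ tl) := by
          rw [← htl, hsplit]; simp
        have haux : AB a v = s'.boolVal v := by simp [hAB]
        rw [hsplit, ← haux]
        refine chainB_split' _ _ _ _ _ _ _ (by simp [hv]) ?_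
        intro b hb _
        have : a ∈ before ord b :=
          mem_before_of_split hnd hordsplit (by simp [hb])
        simp [hAB, this]
    · rw [if_neg hal]
      refine chainB_const' _ _ _ _ _ ?_
      intro b hb _
      have h1 : b ≠ a := fun h => hal (h ▸ hb)
      have h2 : a ∉ before ord b := fun h => hal (mem_of_prefixes hl hb h)
      simp [hAB, h1, h2]
  have CNgen : ∀ l : List A, l <+: ord → ∀ x,
      chainN P.acts l s.numVal AN x = (if a ∈ l then s'.numVal x else s.numVal x) := by
    intro l hl x
    by_cases hal : a ∈ l
    · rw [if_pos hal]
      cases hx : (P.acts a).effN x with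
      | none =>
        rw [hNnone x hx]
        refine chainN_const' _ _ _ _ _ ?_
        intro b _ _
        simp only [hAN]
        split
        · exact hNnone x hx
        · rfl
      | some e =>
        obtain ⟨l1, l2, hsplit⟩ := List.append_of_mem hal
        obtain ⟨tl, htl⟩ := hl
        have hordsplit : ord = l1 ++ a :: (l2 ++ tl) := by
          rw [← htl, hsplit]; simp
        have haux : AN a x = s'.numVal x := by simp [hAN]
        rw [hsplit, ← haux]
        refine chainN_split' _ _ _ _ _ _ _ (by simp [hx]) ?_
        intro b hb _
        have : a ∈ before ord b :=
          mem_before_of_split hnd hordsplit (by simp [hb])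
        simp [hAN, this]
    · rw [if_neg hal]
      refine chainN_const' _ _ _ _ _ ?_
      intro b hb _
      have h1 : b ≠ a := fun h => hal (h ▸ hb)
      have h2 : a ∉ before ord b := fun h => hal (mem_of_prefixes hl hb h)
      simp [hAN, h1, h2]
  have CNfun : ∀ b : A, a ∉ before ord b →
      chainN P.acts (before ord b) s.numVal AN = s.numVal := by
    intro b hb
    funext x
    rw [CNgen (before ord b) (before_prefix' ord b) x, if_neg hb]
  refine ⟨?_, ?_, ?_, ?_, ?_⟩
  · -- pre
    intro a' ha'
    have haa : a' = a := by by_contra h; simp [h] at ha'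
    subst haa
    have hnb : a' ∉ before ord a' := not_mem_before_self ord a'
    refine ⟨?_, ?_, ?_⟩
    · intro v hv
      rw [CBgen (before ord a') (before_prefix' ord a') v, if_neg hnb]
      exact hex.1 _ hv
    · intro v hv
      rw [CBgen (before ord a') (before_prefix' ord a') v, if_neg hnb]
      exact hex.1 _ hv
    · intro c hc
      rw [CNfun a' hnb]
      exact hex.2 _ hc
  · -- effB
    intro a' v b' hvb'
    constructor
    · intro h
      have haa : a' = a := by by_contra hne; simp [hne] at h
      subst haa
      simp only [hAB, if_pos (Or.inr rfl)]
      exact hBsome v b' hvb'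
    · intro h
      have haa : a' ≠ a := by intro he; subst he; simp at h
      rw [CBgen (before ord a') (before_prefix' ord a') v]
      by_cases hm : a ∈ before ord a'
      · simp [hAB, hm]
      · simp [hAB, hm, haa]
  · -- effN
    intro a' x e hxe
    constructor
    · intro h
      have haa : a' = a := by by_contra hne; simp [hne] at h
      subst haa
      have hnb : a' ∉ before ord a' := not_mem_before_self ord a'
      rw [CNfun a' hnb]
      simp only [hAN, if_pos (Or.inr rfl)]
      exact hNsome x e hxe
    · intro h
      have haa : a' ≠ a := by intro he; subst he; simp at h
      rw [CNgen (before ord a') (before_prefix' ord a') x]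
      by_cases hm : a ∈ before ord a'
      · simp [hAN, hm]
      · simp [hAN, hm, haa]
  · -- frameB
    intro v
    rw [CBgen ord (List.prefix_refl ord) v, if_pos (hall a)]
  · -- frameN
    intro x
    rw [CNgen ord (List.prefix_refl ord) x, if_pos (hall a)]

end CompletenessAux2
section CompletenessAux3

variable {VB VN A : Type} [Fintype VN]

/-- The state after executing the first `i` actions of `α` (ignoring executability). -/
private noncomputable def stAt (acts : A → Act VB VN) (α : List A) (s : PState VB VN) :
    ℕ → PState VB VN
  | 0 => s
  | i + 1 =>
    match α[i]? with
    | some a => (acts a).result (stAt acts α s i)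
    | none => stAt acts α s i

private lemma stAt_cons (acts : A → Act VB VN) (a : A) (α : List A) (s : PState VB VN) :
    ∀ i : ℕ, stAt acts (a :: α) s (i + 1) = stAt acts α ((acts a).result s) i := by
  intro i
  induction i with
  | zero => simp [stAt]
  | succ i ih =>
    show stAt acts (a :: α) s (i + 1 + 1) = _
    rw [stAt, List.getElem?_cons_succ, ih]
    rfl

private lemma exec_stAt (acts : A → Act VB VN) :
    ∀ (α : List A) (s t : PState VB VN), execSeq acts α s = some t →
      (∀ i, ∀ h : i < α.length, (acts (α.get ⟨i, h⟩)).execIn (stAt acts α s i)) ∧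
      stAt acts α s α.length = t := by
  intro α
  induction α with
  | nil =>
    intro s t h
    simp [execSeq] at h
    exact ⟨fun i hi => absurd hi (by simp), by simp [stAt, h]⟩
  | cons a α ih =>
    intro s t h
    rw [execSeq] at h
    split at h
    case isTrue hex =>
      obtain ⟨h1, h2⟩ := ih ((acts a).result s) t h
      constructor
      · intro i hi
        match i with
        | 0 => exact hex
        | i + 1 =>
          rw [stAt_cons]
          exact h1 i (by simpa using hi)
      · rw [List.length_cons, stAt_cons]
        exact h2
    case isFalse => exact absurd h (by simp)

end CompletenessAux3
/-- for every total order `<` of the actions, the R²∃ `<`-encoding `Π^<`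
is complete: if `Π` has a valid plan, then `Π^<_n` is satisfiable for some `n ≥ 0`. -/
theorem r2e_encoding_complete
    {VB VN A : Type} [Fintype VB] [Fintype VN] [Fintype A]
    (P : Problem VB VN A) (ord : List A) (hnd : ord.Nodup) (hall : ∀ a : A, a ∈ ord)
    (h : P.hasPlan) :
    ∃ n : ℕ, satLt P ord n := by
  classical
  obtain ⟨α, tst, hexec, hgoal⟩ := h
  obtain ⟨hsteps, hlast⟩ := exec_stAt P.acts α P.init tst hexec
  refine ⟨α.length, ⟨⟨fun i => (stAt P.acts α P.init i.val).boolVal,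
      fun i => (stAt P.acts α P.init i.val).numVal,
      fun i b => if b = α.get ⟨i.val, i.isLt⟩ then true else false,
      fun i b v => if (α.get ⟨i.val, i.isLt⟩) ∈ before ord b ∨ b = α.get ⟨i.val, i.isLt⟩
        then (stAt P.acts α P.init (i.val + 1)).boolVal v
        else (stAt P.acts α P.init i.val).boolVal v,
      fun i b x => if (α.get ⟨i.val, i.isLt⟩) ∈ before ord b ∨ b = α.get ⟨i.val, i.isLt⟩
        then (stAt P.acts α P.init (i.val + 1)).numVal x
        else (stAt P.acts α P.init i.val).numVal x⟩, ?_, ?_, ?_, ?_⟩⟩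
  · rfl
  · rfl
  · intro i
    have hstep : stAt P.acts α P.init (i.val + 1)
        = (P.acts (α.get ⟨i.val, i.isLt⟩)).result (stAt P.acts α P.init i.val) := by
      rw [stAt, List.getElem?_eq_getElem i.isLt]; rfl
    simp only [Fin.coe_castSucc, Fin.val_succ, hstep]
    exact step_Tlt P ord hnd hall (α.get ⟨i.val, i.isLt⟩) (stAt P.acts α P.init i.val)
      (hsteps i.val i.isLt)
  · show P.goalSat (stAt P.acts α P.init (Fin.last α.length).val).boolVal
      (stAt P.acts α P.init (Fin.last α.length).val).numVal
    rw [Fin.val_last, hlast]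
    exact hgoal
end PatternPlanning
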